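/- Let μ ∈ 𝐌 and ℓ ∈ ℕ with ℓ ≥ 1, and let μ̃_ℓ := (1/ℓ) ∑_{k=0}^{ℓ−1} δ_{Q_μ(k/ℓ)} be the ℓ-quantile approximation of μ (where δ_x is the Dirac mass at x). Then for all x ∈ ℝ₊, F_μ(x) ≤ F_{μ̃_ℓ}(x) ≤ F_μ(x) + 1/ℓ. -/

import Mathlib

open MeasureTheory Filter Topology

noncomputable section

/-- The mean of a measure on `ℝ`. -/
def mMean (μ : Measure ℝ) : ℝ := ∫ x, x ∂μ

/-- `μ ∈ 𝐌`: a Borel probability measure on `ℝ₊` (modelled as a measure on `ℝ` giving no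
mass to negative numbers) with finite nonzero mean. -/
def MemM (μ : Measure ℝ) : Prop :=
  IsProbabilityMeasure μ ∧ μ {x | x < 0} = 0 ∧ Integrable id μ ∧ 0 < mMean μ

/-- The cumulative distribution function `F_μ(x) = μ([0,x])`. -/
def cdfR (μ : Measure ℝ) (x : ℝ) : ℝ := (μ (Set.Icc 0 x)).toReal

/-- The quantile function `Q_μ(p) = inf {x ∈ ℝ₊ : F_μ(x) ≥ p}`. -/
def quant (μ : Measure ℝ) (p : ℝ) : ℝ := sInf {x : ℝ | 0 ≤ x ∧ p ≤ cdfR μ x}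

/-- The Lorenz function `L_μ(p) = (∫_0^p Q_μ(t) dt) / m_μ`. -/
def lorenz (μ : Measure ℝ) (p : ℝ) : ℝ := (∫ t in (0:ℝ)..p, quant μ t) / mMean μ

/-- The pseudo-Lorenz function `Λ_μ(p) = (∫_{[0,Q_μ(p)]} u dμ(u)) / m_μ` for `p ∈ [0,1)`,
with `Λ_μ(1) = 1`. -/
def pseudoLorenz (μ : Measure ℝ) (p : ℝ) : ℝ :=
  if p = 1 then 1 else (∫ u in Set.Icc (0:ℝ) (quant μ p), u ∂μ) / mMean μ

/-- The Gini coefficient `G(μ) = (∫∫ |x-y| d(μ⊗μ)) / (2 m_μ)`. -/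
def gini (μ : Measure ℝ) : ℝ := (∫ z : ℝ × ℝ, |z.1 - z.2| ∂(μ.prod μ)) / (2 * mMean μ)

/-- The Hoover coefficient `H(μ) = (∫ |x - m_μ| dμ) / (2 m_μ)`. -/
def hoover (μ : Measure ℝ) : ℝ := (∫ x, |x - mMean μ| ∂μ) / (2 * mMean μ)

/-- The Wasserstein-1 distance `W₁(μ,ν) = ∫_0^1 |Q_μ - Q_ν|`. -/
def W1 (μ ν : Measure ℝ) : ℝ := ∫ t in (0:ℝ)..1, |quant μ t - quant ν t|

/-- Weak convergence of a sequence of measures: convergence of integrals of all bounded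
continuous functions. -/
def WeakCv (μs : ℕ → Measure ℝ) (ν : Measure ℝ) : Prop :=
  ∀ f : ℝ → ℝ, Continuous f → (∃ C : ℝ, ∀ x, |f x| ≤ C) →
    Tendsto (fun n => ∫ x, f x ∂(μs n)) atTop (𝓝 (∫ x, f x ∂ν))

/-- Uniform integrability of a family of measures on `ℝ₊`:
`sup_i ∫_{(α,∞)} x dμ_i(x) → 0` as `α → +∞`. -/
def UnifInt {ι : Type*} (μs : ι → Measure ℝ) : Prop :=
  ∀ ε > (0:ℝ), ∃ A : ℝ, ∀ α ≥ A, ∀ i, (∫ x in Set.Ioi α, x ∂(μs i)) ≤ ε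

end

/-- The `ℓ`-quantile approximation of `μ`: `(1/ℓ) ∑_{k=0}^{ℓ-1} δ_{Q_μ(k/ℓ)}`. -/
noncomputable def quantApprox (μ : Measure ℝ) (ℓ : ℕ) : Measure ℝ :=
  ((ℓ : ENNReal)⁻¹) • ∑ k ∈ Finset.range ℓ, Measure.dirac (quant μ ((k : ℝ) / (ℓ : ℝ)))


section Aux

open MeasureTheory Filter Topology

lemma cdfR_mono (μ : Measure ℝ) [IsFiniteMeasure μ] : Monotone (cdfR μ) := by
  intro a b hab
  exact ENNReal.toReal_mono (measure_ne_top μ _)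
    (measure_mono (Set.Icc_subset_Icc_right hab))

lemma cdfR_le_one (μ : Measure ℝ) [IsProbabilityMeasure μ] (x : ℝ) : cdfR μ x ≤ 1 := by
  have h : μ (Set.Icc 0 x) ≤ 1 := prob_le_one
  calc cdfR μ x ≤ (1 : ENNReal).toReal := ENNReal.toReal_mono (by simp) h
  _ = 1 := by simp

lemma cdfR_nonneg (μ : Measure ℝ) (x : ℝ) : 0 ≤ cdfR μ x := ENNReal.toReal_nonneg

lemma le_cdfR_of_forall (μ : Measure ℝ) [IsProbabilityMeasure μ] (x p : ℝ)
    (h : ∀ ε > (0:ℝ), p ≤ cdfR μ (x + ε)) : p ≤ cdfR μ x := by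
  have hlim : Tendsto (fun n : ℕ => (1:ℝ) / (n + 1)) atTop (𝓝 0) :=
    tendsto_one_div_add_atTop_nhds_zero_nat
  have hI : ⋂ n : ℕ, Set.Icc (0:ℝ) (x + 1/(n+1)) = Set.Icc 0 x := by
    ext y
    simp only [Set.mem_iInter, Set.mem_Icc]
    constructor
    · intro hy
      refine ⟨(hy 0).1, ?_⟩
      have hx : Tendsto (fun n : ℕ => x + 1/(n+1)) atTop (𝓝 (x + 0)) :=
        tendsto_const_nhds.add hlim
      rw [add_zero] at hx
      exact ge_of_tendsto' hx (fun n => (hy n).2)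
    · intro hy n
      refine ⟨hy.1, hy.2.trans (le_add_of_nonneg_right (by positivity))⟩
  have hanti : Antitone (fun n : ℕ => Set.Icc (0:ℝ) (x + 1/(n+1))) := by
    intro n m hnm
    apply Set.Icc_subset_Icc_right
    have : (1:ℝ)/(m+1) ≤ 1/(n+1) := by
      apply one_div_le_one_div_of_le (by positivity)
      exact_mod_cast (add_le_add_iff_right 1).2 (Nat.cast_le.2 hnm)
    linarith
  have hmeas : Tendsto (fun n : ℕ => μ (Set.Icc (0:ℝ) (x + 1/(n+1)))) atTop
      (𝓝 (μ (Set.Icc 0 x))) := by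
    rw [← hI]
    exact tendsto_measure_iInter_atTop (fun n => measurableSet_Icc.nullMeasurableSet) hanti
      ⟨0, measure_ne_top μ _⟩
  have htoReal : Tendsto (fun n : ℕ => cdfR μ (x + 1/(n+1))) atTop (𝓝 (cdfR μ x)) :=
    (ENNReal.tendsto_toReal (measure_ne_top μ _)).comp hmeas
  exact ge_of_tendsto' htoReal (fun n => h _ (by positivity))

lemma quant_nonneg (μ : Measure ℝ) (p : ℝ) : 0 ≤ quant μ p :=
  Real.sInf_nonneg (fun x hx => hx.1)

lemma quant_le_of_le (μ : Measure ℝ) (p x : ℝ) (hx : 0 ≤ x) (h : p ≤ cdfR μ x) :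
    quant μ p ≤ x :=
  csInf_le ⟨0, fun y hy => hy.1⟩ ⟨hx, h⟩

lemma cdfR_tendsto_one (μ : Measure ℝ) [IsProbabilityMeasure μ]
    (hneg : μ {x | x < 0} = 0) :
    Tendsto (fun n : ℕ => cdfR μ n) atTop (𝓝 1) := by
  have hmono : Monotone (fun n : ℕ => Set.Icc (0:ℝ) n) := by
    intro n m hnm
    exact Set.Icc_subset_Icc_right (Nat.cast_le.2 hnm)
  have hU : ⋃ n : ℕ, Set.Icc (0:ℝ) n = Set.Ici 0 := by
    ext y
    simp only [Set.mem_iUnion, Set.mem_Icc, Set.mem_Ici]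
    constructor
    · rintro ⟨n, hn, _⟩; exact hn
    · intro hy
      obtain ⟨n, hn⟩ := exists_nat_ge y
      exact ⟨n, hy, hn⟩
  have hIci : μ (Set.Ici (0:ℝ)) = 1 := by
    have h1 := measure_add_measure_compl (μ := μ) (measurableSet_Ici (a := (0:ℝ)))
    rw [Set.compl_Ici] at h1
    have h2 : μ (Set.Iio (0:ℝ)) = 0 := hneg
    rw [h2, add_zero, measure_univ] at h1
    exact h1
  have hm : Tendsto (fun n : ℕ => μ (Set.Icc (0:ℝ) n)) atTop (𝓝 1) := by
    have := tendsto_measure_iUnion_atTop (μ := μ) hmono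
    rwa [hU, hIci] at this
  have := (ENNReal.tendsto_toReal (by simp : (1:ENNReal) ≠ ⊤)).comp hm
  exact this

lemma le_cdfR_of_quant_le (μ : Measure ℝ) [IsProbabilityMeasure μ]
    (hneg : μ {x | x < 0} = 0) (p x : ℝ) (hp1 : p < 1)
    (h : quant μ p ≤ x) : p ≤ cdfR μ x := by
  have hSne : {y : ℝ | 0 ≤ y ∧ p ≤ cdfR μ y}.Nonempty := by
    have := ((cdfR_tendsto_one μ hneg).eventually (eventually_ge_nhds hp1)).exists
    obtain ⟨n, hn⟩ := this
    exact ⟨n, Nat.cast_nonneg n, hn⟩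
  apply le_cdfR_of_forall
  intro ε hε
  obtain ⟨s, hs, hslt⟩ := Real.lt_sInf_add_pos hSne hε
  have hsx : s ≤ x + ε := le_of_lt (lt_of_lt_of_le hslt (by
    have : sInf {y : ℝ | 0 ≤ y ∧ p ≤ cdfR μ y} ≤ x := h
    linarith))
  exact hs.2.trans (cdfR_mono μ hsx)

end Aux

/-- For `μ ∈ 𝐌` and `ℓ ≥ 1`, the c.d.f. of the `ℓ`-quantile
approximation satisfies `F_μ(x) ≤ F_{μ̃_ℓ}(x) ≤ F_μ(x) + 1/ℓ` for all `x ∈ ℝ₊`. -/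
theorem cdf_quantApprox_bounds (μ : Measure ℝ) (hμ : MemM μ) (ℓ : ℕ) (hℓ : 1 ≤ ℓ) :
    ∀ x : ℝ, 0 ≤ x →
      cdfR μ x ≤ cdfR (quantApprox μ ℓ) x ∧
      cdfR (quantApprox μ ℓ) x ≤ cdfR μ x + 1 / (ℓ : ℝ) := by
  obtain ⟨hprob, hneg, _, _⟩ := hμ
  have hℓ0 : (0:ℝ) < ℓ := by exact_mod_cast hℓ
  intro x hx
  set F := cdfR μ x with hF
  have hF0 : 0 ≤ F := cdfR_nonneg μ x
  have hF1 : F ≤ 1 := cdfR_le_one μ x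
  classical
  -- compute cdf of quantApprox
  set N := (Finset.range ℓ).filter (fun k : ℕ => quant μ ((k:ℝ)/ℓ) ≤ x) with hN
  have happ : cdfR (quantApprox μ ℓ) x = (N.card : ℝ) / ℓ := by
    have hmeas : MeasurableSet (Set.Icc (0:ℝ) x) := measurableSet_Icc
    have h1 : (quantApprox μ ℓ) (Set.Icc 0 x)
        = (ℓ : ENNReal)⁻¹ * ∑ k ∈ Finset.range ℓ,
            (Measure.dirac (quant μ ((k:ℝ)/ℓ))) (Set.Icc 0 x) := by
      rw [quantApprox, Measure.smul_apply, Measure.finset_sum_apply]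
      rfl
    have h2 : ∀ k ∈ Finset.range ℓ,
        (Measure.dirac (quant μ ((k:ℝ)/ℓ))) (Set.Icc 0 x)
          = if quant μ ((k:ℝ)/ℓ) ≤ x then 1 else 0 := by
      intro k _
      rw [Measure.dirac_apply' _ hmeas]
      by_cases h : quant μ ((k:ℝ)/ℓ) ≤ x
      · rw [if_pos h, Set.indicator_of_mem (Set.mem_Icc.2 ⟨quant_nonneg μ _, h⟩)]
        rfl
      · rw [if_neg h, Set.indicator_of_notMem]
        simp [Set.mem_Icc, h]
    rw [cdfR, h1, Finset.sum_congr rfl h2, Finset.sum_boole]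
    rw [ENNReal.toReal_mul, ENNReal.toReal_inv, ENNReal.toReal_natCast, ENNReal.toReal_natCast,
      inv_mul_eq_div]
  -- characterize membership in N
  have hmem : ∀ k : ℕ, k ∈ N ↔ k < ℓ ∧ (k:ℝ)/ℓ ≤ F := by
    intro k
    rw [hN, Finset.mem_filter, Finset.mem_range]
    constructor
    · rintro ⟨hk, hq⟩
      refine ⟨hk, le_cdfR_of_quant_le μ hneg _ _ ?_ hq⟩
      rw [div_lt_one hℓ0]
      exact_mod_cast hk
    · rintro ⟨hk, hq⟩
      exact ⟨hk, quant_le_of_le μ _ _ hx hq⟩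
  set m := ⌊(ℓ:ℝ) * F⌋₊ with hm
  have hmF : (0:ℝ) ≤ (ℓ:ℝ) * F := by positivity
  -- upper bound on card
  have hcard_le : N.card ≤ m + 1 := by
    apply Finset.card_le_card ?_ |>.trans (le_of_eq (Finset.card_range (m+1)))
    intro k hk
    rw [hmem] at hk
    rw [Finset.mem_range, Nat.lt_succ_iff, Nat.le_floor_iff hmF]
    rw [div_le_iff₀ hℓ0] at hk
    linarith [hk.2]
  -- lower bound on card
  have hcard_ge : (ℓ:ℝ) * F ≤ (N.card : ℝ) := by
    have hsub : Finset.range (min ℓ (m + 1)) ⊆ N := by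
      intro k hk
      rw [Finset.mem_range, lt_min_iff] at hk
      rw [hmem]
      refine ⟨hk.1, ?_⟩
      rw [div_le_iff₀ hℓ0]
      have : k ≤ m := Nat.lt_succ_iff.1 hk.2
      have := (Nat.le_floor_iff hmF).1 this
      linarith
    have h1 : min ℓ (m + 1) ≤ N.card := by
      calc min ℓ (m+1) = (Finset.range (min ℓ (m+1))).card := (Finset.card_range _).symm
      _ ≤ N.card := Finset.card_le_card hsub
    have h2 : (ℓ:ℝ) * F ≤ (min ℓ (m + 1) : ℕ) := by
      rcases le_total ℓ (m+1) with h | h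
      · rw [min_eq_left h]
        calc (ℓ:ℝ) * F ≤ (ℓ:ℝ) * 1 := by nlinarith
        _ = ℓ := mul_one _
      · rw [min_eq_right h]
        push_cast
        linarith [Nat.lt_floor_add_one ((ℓ:ℝ) * F)]
    exact h2.trans (by exact_mod_cast h1)
  constructor
  · rw [happ, le_div_iff₀ hℓ0]
    linarith
  · rw [happ, div_le_iff₀ hℓ0]
    have h1 : (N.card : ℝ) ≤ (m:ℝ) + 1 := by exact_mod_cast hcard_le
    have hfl : (m:ℝ) ≤ (ℓ:ℝ) * F := Nat.floor_le hmF
    have h2 : (F + 1/(ℓ:ℝ)) * ℓ = F * ℓ + 1 := by field_simp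
    rw [h2]; nlinarith
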